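/- Let (S0,ρ0) be a finite conjunctive argumentation network, with ρ0 ⊆ (2^{S0}∖{∅})×S0. Form (S1,R1) by adding, for each pair (Y,z)∈ρ0, fresh distinct auxiliary points α(y,Y,z) for each y∈Y and a point β(Y,z), and letting R1 consist of all edges y→α(y,Y,z), α(y,Y,z)→β(Y,z), and β(Y,z)→z (for (Y,z)∈ρ0 and y∈Y). Then a labelling λ0: S0→{in,out,und} is a complete conjunctive labelling of (S0,ρ0) if and only if λ0 is the restriction to S0 of some complete extension λ1 of (S1,R1). -/

import Mathlib

/-- The three Caminada labels. -/
inductive Label where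
  | in_ : Label
  | out : Label
  | und : Label
deriving DecidableEq

/-- Caminada labelling / complete extension of an ordinary network `(S, R)`. -/
def IsCompleteExt {S : Type} (R : S → S → Prop) (l : S → Label) : Prop :=
  (∀ x, l x = .in_ ↔ ∀ y, R y x → l y = .out) ∧
  (∀ x, l x = .out ↔ ∃ y, R y x ∧ l y = .in_) ∧
  (∀ x, l x = .und ↔ ((∀ y, R y x → l y ≠ .in_) ∧ ∃ y, R y x ∧ l y = .und))

/-- Complete conjunctive labelling of a conjunctive network `(S0, ρ0)`:
`z` is out iff some joint attacker `Y` of `z` has all members in; `z` is in iff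
every joint attacker of `z` has some member out; `z` is und otherwise (no joint
attacker has all members in, and some joint attacker has no member out). -/
def IsConjComplete {S0 : Type} (rho : Finset S0 → S0 → Prop) (l : S0 → Label) : Prop :=
  (∀ z, l z = .out ↔ ∃ Y, rho Y z ∧ ∀ y ∈ Y, l y = .in_) ∧
  (∀ z, l z = .in_ ↔ ∀ Y, rho Y z → ∃ y ∈ Y, l y = .out) ∧
  (∀ z, l z = .und ↔
    ((∀ Y, rho Y z → ∃ y ∈ Y, l y ≠ .in_) ∧ (∃ Y, rho Y z ∧ ∀ y ∈ Y, l y ≠ .out)))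

/-- The auxiliary `α`-points: one point `α(y,Y,z)` for each `(Y,z) ∈ ρ0` and
each `y ∈ Y`. -/
def AlphaPt {S0 : Type} (rho : Finset S0 → S0 → Prop) : Type :=
  {p : S0 × Finset S0 × S0 // rho p.2.1 p.2.2 ∧ p.1 ∈ p.2.1}

/-- The auxiliary `β`-points: one point `β(Y,z)` for each `(Y,z) ∈ ρ0`. -/
def BetaPt {S0 : Type} (rho : Finset S0 → S0 → Prop) : Type :=
  {p : Finset S0 × S0 // rho p.1 p.2}

/-- The enlarged set of arguments `S1 = S0 ∪ {α(y,Y,z)} ∪ {β(Y,z)}`. -/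
def S1 {S0 : Type} (rho : Finset S0 → S0 → Prop) : Type :=
  S0 ⊕ (AlphaPt rho ⊕ BetaPt rho)

/-- The attack relation `R1` on `S1`: edges `y → α(y,Y,z)`,
`α(y,Y,z) → β(Y,z)` and `β(Y,z) → z`, for `(Y,z) ∈ ρ0` and `y ∈ Y`. -/
def R1 {S0 : Type} (rho : Finset S0 → S0 → Prop) : S1 rho → S1 rho → Prop
  | .inl y, .inr (.inl a) => y = a.1.1
  | .inr (.inl a), .inr (.inr b) => a.1.2 = b.1
  | .inr (.inr b), .inl z => b.1.2 = z
  | _, _ => False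


lemma Label.eq_und_iff (l : Label) : l = .und ↔ l ≠ .in_ ∧ l ≠ .out := by
  cases l <;> simp

lemma und_clause {S : Type} (R : S → S → Prop) (l : S → Label)
    (h1 : ∀ x, l x = .in_ ↔ ∀ y, R y x → l y = .out)
    (h2 : ∀ x, l x = .out ↔ ∃ y, R y x ∧ l y = .in_) (x : S) :
    l x = .und ↔ ((∀ y, R y x → l y ≠ .in_) ∧ ∃ y, R y x ∧ l y = .und) := by
  rw [Label.eq_und_iff, ne_eq, ne_eq, h1 x, h2 x]
  push_neg
  constructor
  · rintro ⟨hA, hB⟩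
    refine ⟨hB, ?_⟩
    obtain ⟨y, hy, hout⟩ := hA
    refine ⟨y, hy, ?_⟩
    have hni := hB y hy
    rw [Label.eq_und_iff]
    exact ⟨hni, hout⟩
  · rintro ⟨hB, y, hy, hu⟩
    exact ⟨⟨y, hy, by simp [hu]⟩, hB⟩

lemma conj_und_clause {S0 : Type} (rho : Finset S0 → S0 → Prop) (l : S0 → Label)
    (h1 : ∀ z, l z = .out ↔ ∃ Y, rho Y z ∧ ∀ y ∈ Y, l y = .in_)
    (h2 : ∀ z, l z = .in_ ↔ ∀ Y, rho Y z → ∃ y ∈ Y, l y = .out) (z : S0) :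
    l z = .und ↔
      ((∀ Y, rho Y z → ∃ y ∈ Y, l y ≠ .in_) ∧ (∃ Y, rho Y z ∧ ∀ y ∈ Y, l y ≠ .out)) := by
  rw [Label.eq_und_iff, ne_eq, ne_eq, h2 z, h1 z]
  push_neg
  tauto

/-- Mirror label: the label forced on `α(y,Y,z)` by the label of `y`. -/
def flipL : Label → Label
  | .in_ => .out
  | .out => .in_
  | .und => .und

open Classical in
/-- The label forced on `β(Y,z)` by the labels of the members of `Y`. -/
noncomputable def betaLab {S0 : Type} (l0 : S0 → Label) (Y : Finset S0) : Label :=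
  if ∀ y ∈ Y, l0 y = .in_ then .in_
  else if ∃ y ∈ Y, l0 y = .out then .out
  else .und

lemma betaLab_eq_in {S0 : Type} (l0 : S0 → Label) (Y : Finset S0) :
    betaLab l0 Y = .in_ ↔ ∀ y ∈ Y, l0 y = .in_ := by
  unfold betaLab
  split_ifs with h1 h2 <;> simp_all

lemma betaLab_eq_out {S0 : Type} (l0 : S0 → Label) (Y : Finset S0) :
    betaLab l0 Y = .out ↔ ∃ y ∈ Y, l0 y = .out := by
  unfold betaLab
  split_ifs with h1 h2
  · constructor
    · intro h; exact absurd h (by simp)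
    · rintro ⟨y, hy, hout⟩
      have := h1 y hy
      simp [this] at hout
  · simp [h2]
  · simp [h2]


/-- The canonical extension of a labelling `l0` of `S0` to `S1`. -/
noncomputable def lift1 {S0 : Type} {rho : Finset S0 → S0 → Prop} (l0 : S0 → Label) :
    S1 rho → Label
  | .inl z => l0 z
  | .inr (.inl a) => flipL (l0 a.1.1)
  | .inr (.inr b) => betaLab l0 b.1.1

lemma flipL_eq_in (l : Label) : flipL l = .in_ ↔ l = .out := by cases l <;> simp [flipL]
lemma flipL_eq_out (l : Label) : flipL l = .out ↔ l = .in_ := by cases l <;> simp [flipL]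

lemma lift1_complete {S0 : Type} (rho : Finset S0 → S0 → Prop) (l0 : S0 → Label)
    (hout0 : ∀ z, l0 z = .out ↔ ∃ Y, rho Y z ∧ ∀ y ∈ Y, l0 y = .in_)
    (hin0 : ∀ z, l0 z = .in_ ↔ ∀ Y, rho Y z → ∃ y ∈ Y, l0 y = .out) :
    IsCompleteExt (R1 rho) (lift1 l0) := by
  have h1 : ∀ x, lift1 (rho := rho) l0 x = .in_ ↔
      ∀ y, R1 rho y x → lift1 (rho := rho) l0 y = .out := by
    rintro (z | a | b)
    · show l0 z = .in_ ↔ _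
      rw [hin0 z]
      constructor
      · rintro h (y | a | b) hu
        · exact hu.elim
        · exact hu.elim
        · show betaLab l0 b.1.1 = .out
          rw [betaLab_eq_out]
          exact h b.1.1 (hu ▸ b.2)
      · intro h Y hY
        have := h (.inr (.inr ⟨(Y, z), hY⟩)) rfl
        exact (betaLab_eq_out l0 Y).mp this
    · show flipL (l0 a.1.1) = .in_ ↔ _
      rw [flipL_eq_in]
      constructor
      · rintro h (y | a' | b) hu
        · exact hu ▸ h
        · exact hu.elim
        · exact hu.elim
      · intro h
        exact h (.inl a.1.1) rfl
    · show betaLab l0 b.1.1 = .in_ ↔ _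
      rw [betaLab_eq_in]
      constructor
      · rintro h (y | a | b') hu
        · exact hu.elim
        · show flipL (l0 a.1.1) = .out
          rw [flipL_eq_out]
          exact h a.1.1 (hu ▸ a.2.2)
        · exact hu.elim
      · intro h y hy
        have := h (.inr (.inl ⟨(y, b.1), ⟨b.2, hy⟩⟩)) rfl
        exact (flipL_eq_out (l0 y)).mp this
  have h2 : ∀ x, lift1 (rho := rho) l0 x = .out ↔
      ∃ y, R1 rho y x ∧ lift1 (rho := rho) l0 y = .in_ := by
    rintro (z | a | b)
    · show l0 z = .out ↔ _
      rw [hout0 z]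
      constructor
      · rintro ⟨Y, hY, hall⟩
        exact ⟨.inr (.inr ⟨(Y, z), hY⟩), rfl, (betaLab_eq_in l0 Y).mpr hall⟩
      · rintro ⟨(y | a | b), hu, hin⟩
        · exact hu.elim
        · exact hu.elim
        · exact ⟨b.1.1, hu ▸ b.2, (betaLab_eq_in l0 b.1.1).mp hin⟩
    · show flipL (l0 a.1.1) = .out ↔ _
      rw [flipL_eq_out]
      constructor
      · intro h
        exact ⟨.inl a.1.1, rfl, h⟩
      · rintro ⟨(y | a' | b), hu, hin⟩
        · exact hu ▸ hin
        · exact hu.elim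
        · exact hu.elim
    · show betaLab l0 b.1.1 = .out ↔ _
      rw [betaLab_eq_out]
      constructor
      · rintro ⟨y, hy, hout⟩
        exact ⟨.inr (.inl ⟨(y, b.1), ⟨b.2, hy⟩⟩), rfl, (flipL_eq_in (l0 y)).mpr hout⟩
      · rintro ⟨(y | a | b'), hu, hin⟩
        · exact hu.elim
        · exact ⟨a.1.1, hu ▸ a.2.2, (flipL_eq_in (l0 a.1.1)).mp hin⟩
        · exact hu.elim
  exact ⟨h1, h2, und_clause _ _ h1 h2⟩

/-- A labelling `λ0` of a finite conjunctive network `(S0, ρ0)` (all joint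
attackers nonempty) is a complete conjunctive labelling iff it is the
restriction to `S0` of some complete extension of the enlarged ordinary
network `(S1, R1)`. -/
theorem stmt17 {S0 : Type} [Fintype S0] [DecidableEq S0]
    (rho : Finset S0 → S0 → Prop)
    (hne : ∀ Y z, rho Y z → Y.Nonempty)
    (l0 : S0 → Label) :
    IsConjComplete rho l0 ↔
      ∃ l1 : S1 rho → Label, IsCompleteExt (R1 rho) l1 ∧ ∀ x : S0, l1 (.inl x) = l0 x := by
  constructor
  · rintro ⟨hout0, hin0, _⟩
    exact ⟨lift1 l0, lift1_complete rho l0 hout0 hin0, fun x => rfl⟩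
  · rintro ⟨l1, ⟨h1, h2, _⟩, hr⟩
    have alpha_out : ∀ a : AlphaPt rho, l1 (.inr (.inl a)) = .out ↔ l0 a.1.1 = .in_ := by
      intro a
      rw [h2 (.inr (.inl a))]
      constructor
      · rintro ⟨(y | a' | b), hu, hin⟩
        · exact hu ▸ ((hr y).symm.trans hin)
        · exact hu.elim
        · exact hu.elim
      · intro h
        exact ⟨.inl a.1.1, rfl, (hr _).trans h⟩
    have alpha_in : ∀ a : AlphaPt rho, l1 (.inr (.inl a)) = .in_ ↔ l0 a.1.1 = .out := by
      intro a
      rw [h1 (.inr (.inl a))]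
      constructor
      · intro h
        exact (hr _).symm.trans (h (.inl a.1.1) rfl)
      · rintro h (y | a' | b) hu
        · subst hu
          exact (hr _).trans h
        · exact hu.elim
        · exact hu.elim
    have beta_in : ∀ b : BetaPt rho, l1 (.inr (.inr b)) = .in_ ↔ ∀ y ∈ b.1.1, l0 y = .in_ := by
      intro b
      rw [h1 (.inr (.inr b))]
      constructor
      · intro h y hy
        exact (alpha_out ⟨(y, b.1), ⟨b.2, hy⟩⟩).mp (h (.inr (.inl ⟨(y, b.1), ⟨b.2, hy⟩⟩)) rfl)
      · rintro h (y | a | b') hu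
        · exact hu.elim
        · exact (alpha_out a).mpr (h a.1.1 (hu ▸ a.2.2))
        · exact hu.elim
    have beta_out : ∀ b : BetaPt rho, l1 (.inr (.inr b)) = .out ↔ ∃ y ∈ b.1.1, l0 y = .out := by
      intro b
      rw [h2 (.inr (.inr b))]
      constructor
      · rintro ⟨(y | a | b'), hu, hin⟩
        · exact hu.elim
        · exact ⟨a.1.1, hu ▸ a.2.2, (alpha_in a).mp hin⟩
        · exact hu.elim
      · rintro ⟨y, hy, hout⟩
        exact ⟨.inr (.inl ⟨(y, b.1), ⟨b.2, hy⟩⟩), rfl, (alpha_in _).mpr hout⟩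
    have cout : ∀ z, l0 z = .out ↔ ∃ Y, rho Y z ∧ ∀ y ∈ Y, l0 y = .in_ := by
      intro z
      rw [← hr z, h2 (.inl z)]
      constructor
      · rintro ⟨(y | a | b), hu, hin⟩
        · exact hu.elim
        · exact hu.elim
        · exact ⟨b.1.1, hu ▸ b.2, (beta_in b).mp hin⟩
      · rintro ⟨Y, hY, hall⟩
        exact ⟨.inr (.inr ⟨(Y, z), hY⟩), rfl, (beta_in ⟨(Y, z), hY⟩).mpr hall⟩
    have cin : ∀ z, l0 z = .in_ ↔ ∀ Y, rho Y z → ∃ y ∈ Y, l0 y = .out := by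
      intro z
      rw [← hr z, h1 (.inl z)]
      constructor
      · intro h Y hY
        exact (beta_out ⟨(Y, z), hY⟩).mp (h (.inr (.inr ⟨(Y, z), hY⟩)) rfl)
      · rintro h (y | a | b) hu
        · exact hu.elim
        · exact hu.elim
        · exact (beta_out b).mpr (h b.1.1 (hu ▸ b.2))
    exact ⟨cout, cin, conj_und_clause rho l0 cout cin⟩
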